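/- Let A ∈ ℝ^{m×n} be a real matrix, u₀ ∈ ℝⁿ, d ∈ ℝ^m, and let C ∈ ℝ^{n×n} and Σ ∈ ℝ^{m×m} be symmetric positive definite. Then u^MAP := u₀ + CAᵀ(Σ + ACAᵀ)⁻¹(d − Au₀) is the unique global minimizer over ℝⁿ of the Tikhonov functional J(u) = ½(d − Au)ᵀΣ⁻¹(d − Au) + ½(u − u₀)ᵀC⁻¹(u − u₀). -/

import Mathlib

open Matrix

lemma dot_mulVec_symm {k : ℕ} {M : Matrix (Fin k) (Fin k) ℝ} (hM : Mᵀ = M)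
    (x y : Fin k → ℝ) : x ⬝ᵥ (M *ᵥ y) = y ⬝ᵥ (M *ᵥ x) := by
  rw [Matrix.dotProduct_mulVec, ← Matrix.mulVec_transpose, hM, dotProduct_comm]

lemma dot_A_mulVec {p q : ℕ} (A : Matrix (Fin p) (Fin q) ℝ) (x : Fin q → ℝ)
    (y : Fin p → ℝ) : (A *ᵥ x) ⬝ᵥ y = x ⬝ᵥ (Aᵀ *ᵥ y) := by
  rw [dotProduct_comm, Matrix.dotProduct_mulVec, ← Matrix.mulVec_transpose,
    dotProduct_comm]

lemma quad_expand {k : ℕ} {M : Matrix (Fin k) (Fin k) ℝ} (hM : Mᵀ = M)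
    (x y : Fin k → ℝ) :
    (x + y) ⬝ᵥ (M *ᵥ (x + y)) = x ⬝ᵥ (M *ᵥ x) + 2 * (y ⬝ᵥ (M *ᵥ x)) + y ⬝ᵥ (M *ᵥ y) := by
  rw [Matrix.mulVec_add, dotProduct_add, add_dotProduct, add_dotProduct,
    dot_mulVec_symm hM x y]
  ring

/-- `u^MAP = u₀ + CAᵀ(Σ + ACAᵀ)⁻¹(d − Au₀)` is the unique global minimizer of
the Tikhonov functional `J(u) = ½(d − Au)ᵀΣ⁻¹(d − Au) + ½(u − u₀)ᵀC⁻¹(u − u₀)`. -/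
theorem map_unique_global_minimizer {m n : ℕ}
    (A : Matrix (Fin m) (Fin n) ℝ) (u₀ : Fin n → ℝ) (d : Fin m → ℝ)
    (C : Matrix (Fin n) (Fin n) ℝ) (Sig : Matrix (Fin m) (Fin m) ℝ)
    (hC : C.PosDef) (hSig : Sig.PosDef) :
    let J : (Fin n → ℝ) → ℝ := fun u =>
      (1 / 2) * ((d - A *ᵥ u) ⬝ᵥ (Sig⁻¹ *ᵥ (d - A *ᵥ u))) +
        (1 / 2) * ((u - u₀) ⬝ᵥ (C⁻¹ *ᵥ (u - u₀)))
    let uMAP : Fin n → ℝ := u₀ + (C * Aᵀ * (Sig + A * C * Aᵀ)⁻¹) *ᵥ (d - A *ᵥ u₀)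
    ∀ u : Fin n → ℝ, u ≠ uMAP → J uMAP < J u := by
  intro J uMAP u hu
  have hSinv : (Sig⁻¹).PosDef := hSig.inv
  have hCinv : (C⁻¹).PosDef := hC.inv
  have hSsym : (Sig⁻¹)ᵀ = Sig⁻¹ := hSinv.isHermitian.eq
  have hCsym : (C⁻¹)ᵀ = C⁻¹ := hCinv.isHermitian.eq
  have hACAt : (A * C * Aᵀ).PosSemidef := by
    have := hC.posSemidef.mul_mul_conjTranspose_same A
    simpa [Matrix.conjTranspose_eq_transpose_of_trivial, Matrix.mul_assoc] using this
  have hS : (Sig + A * C * Aᵀ).PosDef := hSig.add_posSemidef hACAt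
  have hCu : C⁻¹ * C = 1 :=
    Matrix.nonsing_inv_mul C ((Matrix.isUnit_iff_isUnit_det C).mp hC.isUnit)
  have hSigu : Sig⁻¹ * Sig = 1 :=
    Matrix.nonsing_inv_mul Sig ((Matrix.isUnit_iff_isUnit_det Sig).mp hSig.isUnit)
  have hSu : (Sig + A * C * Aᵀ) * (Sig + A * C * Aᵀ)⁻¹ = 1 :=
    Matrix.mul_nonsing_inv _ ((Matrix.isUnit_iff_isUnit_det _).mp hS.isUnit)
  set H := Aᵀ * Sig⁻¹ * A + C⁻¹ with hHdef
  have hkey : H * (C * Aᵀ * (Sig + A * C * Aᵀ)⁻¹) = Aᵀ * Sig⁻¹ := by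
    have h1 : H * (C * Aᵀ) = Aᵀ * Sig⁻¹ * (Sig + A * C * Aᵀ) := by
      rw [hHdef, Matrix.add_mul, Matrix.mul_add]
      have e1 : C⁻¹ * (C * Aᵀ) = Aᵀ := by rw [← Matrix.mul_assoc, hCu, Matrix.one_mul]
      have e2 : Aᵀ * Sig⁻¹ * Sig = Aᵀ := by rw [Matrix.mul_assoc, hSigu, Matrix.mul_one]
      rw [e1, e2, add_comm]
      simp [Matrix.mul_assoc]
    calc H * (C * Aᵀ * (Sig + A * C * Aᵀ)⁻¹)
        = H * (C * Aᵀ) * (Sig + A * C * Aᵀ)⁻¹ := by rw [← Matrix.mul_assoc]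
      _ = Aᵀ * Sig⁻¹ * ((Sig + A * C * Aᵀ) * (Sig + A * C * Aᵀ)⁻¹) := by
          rw [h1, Matrix.mul_assoc]
      _ = Aᵀ * Sig⁻¹ := by rw [hSu, Matrix.mul_one]
  have hnormal : H *ᵥ uMAP = (Aᵀ * Sig⁻¹) *ᵥ d + C⁻¹ *ᵥ u₀ := by
    show H *ᵥ (u₀ + (C * Aᵀ * (Sig + A * C * Aᵀ)⁻¹) *ᵥ (d - A *ᵥ u₀)) = _
    rw [Matrix.mulVec_add, Matrix.mulVec_mulVec, hkey, Matrix.mulVec_sub, hHdef,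
      Matrix.add_mulVec]
    have : (Aᵀ * Sig⁻¹ * A) *ᵥ u₀ = (Aᵀ * Sig⁻¹) *ᵥ (A *ᵥ u₀) := by
      rw [Matrix.mulVec_mulVec]
    rw [this]
    abel
  set h : Fin n → ℝ := u - uMAP with hhdef
  have hne : h ≠ 0 := sub_ne_zero.mpr hu
  have hueq : u = uMAP + h := by rw [hhdef]; abel
  have hd : d - A *ᵥ u = (d - A *ᵥ uMAP) + (-(A *ᵥ h)) := by
    rw [hueq, Matrix.mulVec_add]; abel
  have hu0 : u - u₀ = (uMAP - u₀) + h := by rw [hueq]; abel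
  have hcross : h ⬝ᵥ (C⁻¹ *ᵥ (uMAP - u₀)) - (A *ᵥ h) ⬝ᵥ (Sig⁻¹ *ᵥ (d - A *ᵥ uMAP)) = 0 := by
    rw [dot_A_mulVec]
    have e : Aᵀ *ᵥ (Sig⁻¹ *ᵥ (d - A *ᵥ uMAP)) =
        (Aᵀ * Sig⁻¹) *ᵥ d - (Aᵀ * Sig⁻¹ * A) *ᵥ uMAP := by
      simp [Matrix.mulVec_sub, Matrix.mulVec_mulVec, Matrix.mul_assoc]
    rw [e, Matrix.mulVec_sub, ← dotProduct_sub]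
    have hz : C⁻¹ *ᵥ uMAP - C⁻¹ *ᵥ u₀ - ((Aᵀ * Sig⁻¹) *ᵥ d - (Aᵀ * Sig⁻¹ * A) *ᵥ uMAP)
        = H *ᵥ uMAP - ((Aᵀ * Sig⁻¹) *ᵥ d + C⁻¹ *ᵥ u₀) := by
      rw [hHdef, Matrix.add_mulVec]; abel
    rw [hz, hnormal, sub_self, dotProduct_zero]
  have e1 : (d - A *ᵥ u) ⬝ᵥ (Sig⁻¹ *ᵥ (d - A *ᵥ u)) =
      (d - A *ᵥ uMAP) ⬝ᵥ (Sig⁻¹ *ᵥ (d - A *ᵥ uMAP))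
        - 2 * ((A *ᵥ h) ⬝ᵥ (Sig⁻¹ *ᵥ (d - A *ᵥ uMAP)))
        + (A *ᵥ h) ⬝ᵥ (Sig⁻¹ *ᵥ (A *ᵥ h)) := by
    rw [hd, quad_expand hSsym]
    simp only [Matrix.mulVec_neg, neg_dotProduct, dotProduct_neg]
    ring
  have e2 : (u - u₀) ⬝ᵥ (C⁻¹ *ᵥ (u - u₀)) =
      (uMAP - u₀) ⬝ᵥ (C⁻¹ *ᵥ (uMAP - u₀)) + 2 * (h ⬝ᵥ (C⁻¹ *ᵥ (uMAP - u₀)))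
        + h ⬝ᵥ (C⁻¹ *ᵥ h) := by
    rw [hu0, quad_expand hCsym]
  have hJu : J u = (1 / 2) * ((d - A *ᵥ u) ⬝ᵥ (Sig⁻¹ *ᵥ (d - A *ᵥ u))) +
      (1 / 2) * ((u - u₀) ⬝ᵥ (C⁻¹ *ᵥ (u - u₀))) := rfl
  have hJM : J uMAP = (1 / 2) * ((d - A *ᵥ uMAP) ⬝ᵥ (Sig⁻¹ *ᵥ (d - A *ᵥ uMAP))) +
      (1 / 2) * ((uMAP - u₀) ⬝ᵥ (C⁻¹ *ᵥ (uMAP - u₀))) := rfl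
  have hq1 : 0 ≤ (A *ᵥ h) ⬝ᵥ (Sig⁻¹ *ᵥ (A *ᵥ h)) := by
    have := hSinv.posSemidef.dotProduct_mulVec_nonneg (A *ᵥ h); simpa using this
  have hq2 : 0 < h ⬝ᵥ (C⁻¹ *ᵥ h) := by
    have := hCinv.dotProduct_mulVec_pos hne; simpa using this
  have hexp : J u = J uMAP + (1/2) * ((A *ᵥ h) ⬝ᵥ (Sig⁻¹ *ᵥ (A *ᵥ h)))
      + (1/2) * (h ⬝ᵥ (C⁻¹ *ᵥ h))
      + (h ⬝ᵥ (C⁻¹ *ᵥ (uMAP - u₀)) - (A *ᵥ h) ⬝ᵥ (Sig⁻¹ *ᵥ (d - A *ᵥ uMAP))) := by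
    rw [hJu, hJM, e1, e2]; ring
  rw [hexp, hcross]
  nlinarith
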